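/- Stochastic H-Theorem (Theorem 1): Let U and U* be measure-preserving bijections of (Ω, μ) and T a time reversal such that U*(T(U(x))) = T(x) for every x ∈ Ω. Then for all measurable sets A, B with 0 < μ(A) < ∞ and 0 < μ(B) < ∞, the forward and backward transition probabilities satisfy μ(U(A) ∩ B)/μ(A) = exp(log μ(B) − log μ(A)) · μ(U*(T(B)) ∩ T(A))/μ(B); i.e., Pr(B|A) = e^{S_B(B) − S_B(A)} · Pr*(T(A)|T(B)), where S_B(A) = log μ(A) is the Boltzmann entropy. -/

import Mathlib

open MeasureTheory Set

/-- **Stochastic H-Theorem** (Theorem 1): for measure-preserving bijections `U`, `Ustar`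
of `(Ω, μ)` and a time reversal `T` with `Ustar (T (U x)) = T x`, the forward and backward
transition probabilities between sets of finite positive measure satisfy
`Pr(B|A) = e^{S_B(B) − S_B(A)} · Pr*(T A | T B)`, where `S_B(A) = log μ(A)`. -/
theorem stochastic_H_theorem {Ω : Type*} [MeasurableSpace Ω]
    (μ : Measure Ω) [SigmaFinite μ]
    (U Ustar : Ω ≃ᵐ Ω) (hU : MeasurePreserving U μ μ)
    (hUstar : MeasurePreserving Ustar μ μ)
    (T : Ω → Ω) (hTmeas : Measurable T) (hT : MeasurePreserving T μ μ)
    (hTT : T ∘ T = id)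
    (hrev : ∀ x, Ustar (T (U x)) = T x)
    (A B : Set Ω) (hA : MeasurableSet A) (hB : MeasurableSet B)
    (hA0 : 0 < μ A) (hAfin : μ A < ⊤) (hB0 : 0 < μ B) (hBfin : μ B < ⊤) :
    (μ (U '' A ∩ B)).toReal / (μ A).toReal
      = Real.exp (Real.log (μ B).toReal - Real.log (μ A).toReal)
        * ((μ (Ustar '' (T '' B) ∩ T '' A)).toReal / (μ B).toReal) := by
  have hTinj : Function.Injective T :=
    Function.LeftInverse.injective (g := T) (fun x => congrFun hTT x)
  -- T is an involution, so `T '' S = T ⁻¹' S`.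
  have hTimg : ∀ S : Set Ω, T '' S = T ⁻¹' S := by
    intro S
    ext y
    constructor
    · rintro ⟨x, hx, rfl⟩
      simpa [Set.mem_preimage, show T (T x) = x from congrFun hTT x] using hx
    · intro hy
      exact ⟨T y, hy, congrFun hTT y⟩
  -- measure of images
  have hTmi : ∀ S : Set Ω, MeasurableSet S → μ (T '' S) = μ S := by
    intro S hS
    rw [hTimg, hT.measure_preimage hS.nullMeasurableSet]
  have hUsmi : ∀ S : Set Ω, MeasurableSet S → μ (Ustar '' S) = μ S := by
    intro S hS
    rw [MeasurableEquiv.image_eq_preimage_symm,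
      (hUstar.symm Ustar).measure_preimage hS.nullMeasurableSet]
  have hUAB : MeasurableSet (U '' A ∩ B) := by
    rw [MeasurableEquiv.image_eq_preimage_symm]
    exact (U.symm.measurable hA).inter hB
  -- key set identity
  have hset : Ustar '' (T '' B) ∩ T '' A = Ustar '' (T '' (U '' A ∩ B)) := by
    rw [Set.image_inter hTinj, Set.image_inter Ustar.injective]
    have : Ustar '' (T '' (U '' A)) = T '' A := by
      simp only [Set.image_image, hrev]
    rw [this, Set.inter_comm]
  have hTUAB : MeasurableSet (T '' (U '' A ∩ B)) := by
    rw [hTimg]; exact hTmeas hUAB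
  have hkey : μ (Ustar '' (T '' B) ∩ T '' A) = μ (U '' A ∩ B) := by
    rw [hset, hUsmi _ hTUAB, hTmi _ hUAB]
  rw [hkey]
  have ha : (0:ℝ) < (μ A).toReal := ENNReal.toReal_pos hA0.ne' hAfin.ne
  have hb : (0:ℝ) < (μ B).toReal := ENNReal.toReal_pos hB0.ne' hBfin.ne
  rw [Real.exp_sub, Real.exp_log ha, Real.exp_log hb]
  field_simp
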